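/- Let A₁, A₂ be real square matrices with ψ(A₁) ≤ ψ(A₂) entrywise. Then 0 ≤ e^{ψ(A₁)} ≤ e^{ψ(A₂)} entrywise. -/

import Mathlib

noncomputable def metzlerPart {n : ℕ} (A : Matrix (Fin n) (Fin n) ℝ) : Matrix (Fin n) (Fin n) ℝ :=
  Matrix.of fun i j => if i = j then A i j else |A i j|

open NormedSpace

lemma entry_hasSum {n : ℕ} (B : Matrix (Fin n) (Fin n) ℝ) (i j : Fin n) :
    HasSum (fun k : ℕ => ((k.factorial : ℝ))⁻¹ * (B ^ k) i j) (exp B i j) := by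
  have hc : Continuous (fun M : Matrix (Fin n) (Fin n) ℝ => M i j) :=
    (continuous_apply j).comp (continuous_apply (A := fun _ : Fin n => Fin n → ℝ) i)
  letI : SeminormedRing (Matrix (Fin n) (Fin n) ℝ) := Matrix.linftyOpSemiNormedRing
  letI : NormedRing (Matrix (Fin n) (Fin n) ℝ) := Matrix.linftyOpNormedRing
  letI : NormedAlgebra ℝ (Matrix (Fin n) (Fin n) ℝ) := Matrix.linftyOpNormedAlgebra
  have hs : Summable fun k : ℕ => ((k.factorial : ℝ))⁻¹ • B ^ k :=
    expSeries_summable' (𝕂 := ℝ) B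
  have h1 : HasSum (fun k : ℕ => ((k.factorial : ℝ))⁻¹ • B ^ k) (exp B) := by
    rw [exp_eq_tsum ℝ]; exact hs.hasSum
  let φ : Matrix (Fin n) (Fin n) ℝ →+ ℝ :=
    { toFun := fun M => M i j, map_zero' := rfl, map_add' := fun _ _ => rfl }
  have := h1.map φ hc
  exact this

lemma pow_entry_mono {n : ℕ} (B₁ B₂ : Matrix (Fin n) (Fin n) ℝ)
    (h0 : ∀ i j, 0 ≤ B₁ i j) (h : ∀ i j, B₁ i j ≤ B₂ i j) (k : ℕ) :
    ∀ i j, 0 ≤ (B₁ ^ k) i j ∧ (B₁ ^ k) i j ≤ (B₂ ^ k) i j := by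
  induction k with
  | zero =>
    intro i j
    by_cases hij : i = j <;> simp [Matrix.one_apply, hij]
  | succ k ih =>
    intro i j
    rw [pow_succ, pow_succ, Matrix.mul_apply, Matrix.mul_apply]
    constructor
    · exact Finset.sum_nonneg fun l _ => mul_nonneg (ih i l).1 (h0 l j)
    · exact Finset.sum_le_sum fun l _ =>
        mul_le_mul (ih i l).2 (h l j) (h0 l j) ((ih i l).1.trans (ih i l).2)

lemma exp_entry_mono {n : ℕ} (B₁ B₂ : Matrix (Fin n) (Fin n) ℝ)
    (h0 : ∀ i j, 0 ≤ B₁ i j) (h : ∀ i j, B₁ i j ≤ B₂ i j) (i j : Fin n) :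
    0 ≤ exp B₁ i j ∧ exp B₁ i j ≤ exp B₂ i j := by
  have h1 := entry_hasSum B₁ i j
  have h2 := entry_hasSum B₂ i j
  constructor
  · exact hasSum_le (fun k => mul_nonneg (by positivity)
      (pow_entry_mono B₁ B₂ h0 h k i j).1) hasSum_zero h1
  · exact hasSum_le (fun k => mul_le_mul_of_nonneg_left
      (pow_entry_mono B₁ B₂ h0 h k i j).2 (by positivity)) h1 h2

theorem exp_metzlerPart_monotone {n : ℕ} (A₁ A₂ : Matrix (Fin n) (Fin n) ℝ)
    (h : ∀ i j, metzlerPart A₁ i j ≤ metzlerPart A₂ i j) :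
    ∀ i j, 0 ≤ NormedSpace.exp (metzlerPart A₁) i j ∧
      NormedSpace.exp (metzlerPart A₁) i j ≤ NormedSpace.exp (metzlerPart A₂) i j := by
  set M₁ := metzlerPart A₁ with hM₁
  set M₂ := metzlerPart A₂ with hM₂
  set c : ℝ := ∑ l : Fin n, (|M₁ l l| + |M₂ l l|) with hc
  have hcb : ∀ l, |M₁ l l| + |M₂ l l| ≤ c := by
    intro l
    rw [hc]
    exact Finset.single_le_sum (f := fun l => |M₁ l l| + |M₂ l l|)
      (fun l _ => add_nonneg (abs_nonneg _) (abs_nonneg _)) (Finset.mem_univ l)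
  set B₁ := M₁ + c • (1 : Matrix (Fin n) (Fin n) ℝ) with hB₁
  set B₂ := M₂ + c • (1 : Matrix (Fin n) (Fin n) ℝ) with hB₂
  have hB₁0 : ∀ a b, 0 ≤ B₁ a b := by
    intro a b
    by_cases hab : a = b
    · subst hab
      have h1 := hcb a
      have h2 := neg_abs_le (M₁ a a)
      have h3 := abs_nonneg (M₂ a a)
      simp only [hB₁, Matrix.add_apply, Matrix.smul_apply, Matrix.one_apply_eq, smul_eq_mul,
        mul_one]
      linarith
    · simp only [hB₁, Matrix.add_apply, Matrix.smul_apply, Matrix.one_apply_ne hab, smul_eq_mul,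
        mul_zero, add_zero, hM₁, metzlerPart, Matrix.of_apply, if_neg hab]
      exact abs_nonneg _
  have hB₁₂ : ∀ a b, B₁ a b ≤ B₂ a b := by
    intro a b
    simp only [hB₁, hB₂, Matrix.add_apply]
    exact add_le_add_left (h a b) _
  -- exp of the scalar shift
  have hscal : ∀ (r : ℝ), exp (r • (1 : Matrix (Fin n) (Fin n) ℝ)) =
      Matrix.diagonal (fun _ => Real.exp r) := by
    intro r
    have : r • (1 : Matrix (Fin n) (Fin n) ℝ) = Matrix.diagonal (fun _ => r) := by
      ext a b
      by_cases hab : a = b <;>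
        simp [Matrix.one_apply, Matrix.diagonal, hab]
    rw [this, Matrix.exp_diagonal, Pi.exp_def]
    funext l
    rw [← Real.exp_eq_exp_ℝ]
  have key : ∀ (M B : Matrix (Fin n) (Fin n) ℝ),
      B = M + c • 1 → ∀ a b, exp M a b = exp B a b * Real.exp (-c) := by
    intro M B hMB a b
    have hM : M = B + (-c) • (1 : Matrix (Fin n) (Fin n) ℝ) := by
      rw [hMB]; ext x y; simp [Matrix.add_apply]
    rw [hM, Matrix.exp_add_of_commute B ((-c) • 1)
      ((Commute.one_right B).smul_right (-c)), hscal, Matrix.mul_diagonal]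
  intro i j
  have hmono := exp_entry_mono B₁ B₂ hB₁0 hB₁₂ i j
  rw [key M₁ B₁ hB₁ i j, key M₂ B₂ hB₂ i j]
  constructor
  · exact mul_nonneg hmono.1 (Real.exp_nonneg _)
  · exact mul_le_mul_of_nonneg_right hmono.2 (Real.exp_nonneg _)
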